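/- Fix δ ∈ (0, 1), γ ∈ ℝ, and constants a = r/√(V) and b = C'/√(V) with b > 0 (where V > 0). For α > 0 define f₁^{(α)}(u) = 0 for u ≤ γ and f₁^{(α)}(u) = 1 + α(u − γ) for u > γ. Define G(α) = inf over random variables U with at most 3 support points satisfying E[U] ≤ 0 and E[f₁^{(α)}(U)] ≤ δ of E[Φ(a − bU)], where Φ is the standard normal CDF. Then lim_{α → 0⁺} G(α) = (1 − δ)·Φ(a − bγ). -/

import Mathlib

open MeasureTheory ProbabilityTheory Real Filter
open scoped Topology

/-- The standard normal CDF. -/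
noncomputable def stdNormalCDF (t : ℝ) : ℝ :=
  ((gaussianReal 0 1) (Set.Iic t)).toReal

lemma phi_eq (t : ℝ) : stdNormalCDF t = cdf (gaussianReal 0 1) t :=
  (cdf_eq_real _ _).symm
lemma phi_nonneg (t : ℝ) : 0 ≤ stdNormalCDF t := by rw [phi_eq]; exact cdf_nonneg _ _
lemma phi_le_one (t : ℝ) : stdNormalCDF t ≤ 1 := by rw [phi_eq]; exact cdf_le_one _ _
lemma phi_mono : Monotone stdNormalCDF := by
  intro x y h; rw [phi_eq, phi_eq]; exact monotone_cdf _ h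
lemma phi_meas : Measurable stdNormalCDF := phi_mono.measurable
lemma phi_tendsto_atBot : Tendsto stdNormalCDF atBot (𝓝 0) :=
  (tendsto_cdf_atBot (gaussianReal 0 1)).congr fun x => (phi_eq x).symm

lemma lower_bound (δ γ a b α : ℝ) (hb : 0 < b) (hα : 0 < α)
    (f : ℝ → ℝ → ℝ) (hf : ∀ α u, f α u = if u ≤ γ then 0 else 1 + α * (u - γ))
    (P : Measure ℝ) (hP : IsProbabilityMeasure P)
    (s : Finset ℝ) (hs : P (↑s)ᶜ = 0)
    (hfP : (∫ u, f α u ∂P) ≤ δ) :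
    (1 - δ) * stdNormalCDF (a - b * γ) ≤ ∫ u, stdNormalCDF (a - b * u) ∂P := by
  haveI := hP
  have hmeasf : Measurable (f α) := by
    have h : f α = fun u => if u ≤ γ then 0 else 1 + α * (u - γ) := funext (hf α)
    rw [h]; exact Measurable.ite measurableSet_Iic measurable_const (by fun_prop)
  have haes : ∀ᵐ u ∂P, u ∈ (↑s : Set ℝ) := by
    rw [ae_iff]; exact hs
  have hint_f : Integrable (f α) P := by
    refine (integrable_const (∑ x ∈ s, |f α x|)).mono' hmeasf.aestronglyMeasurable ?_
    filter_upwards [haes] with u hu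
    calc ‖f α u‖ = |f α u| := rfl
    _ ≤ ∑ x ∈ s, |f α x| :=
      Finset.single_le_sum (f := fun x => |f α x|) (fun i _ => abs_nonneg _) hu
  have hPIoi : (P (Set.Ioi γ)).toReal ≤ δ := by
    have h1 : ∫ u, (Set.Ioi γ).indicator (fun _ => (1:ℝ)) u ∂P ≤ ∫ u, f α u ∂P := by
      refine integral_mono_of_nonneg (Filter.Eventually.of_forall ?_) hint_f
        (Filter.Eventually.of_forall ?_)
      · intro u; exact Set.indicator_nonneg (fun _ _ => zero_le_one) u
      · intro u; rw [hf]
        by_cases h : u ≤ γ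
        · simp [Set.indicator_apply, h, not_lt.2 h]
        · simp only [Set.indicator_apply, Set.mem_Ioi, if_neg h, if_pos (not_le.1 h)]
          have := not_le.1 h
          nlinarith
    rw [integral_indicator_const (1:ℝ) measurableSet_Ioi, smul_eq_mul, mul_one] at h1
    linarith [h1.trans hfP, show P.real (Set.Ioi γ) = (P (Set.Ioi γ)).toReal from rfl]
  have hPIic : 1 - δ ≤ (P (Set.Iic γ)).toReal := by
    have hc : P (Set.Iic γ) = 1 - P (Set.Ioi γ) := by
      rw [← Set.compl_Ioi, prob_compl_eq_one_sub measurableSet_Ioi]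
    rw [hc, ENNReal.toReal_sub_of_le prob_le_one ENNReal.one_ne_top]
    simp only [ENNReal.toReal_one]; linarith
  have hintΦ : Integrable (fun u => stdNormalCDF (a - b * u)) P := by
    refine (integrable_const (1:ℝ)).mono'
      ((phi_meas.comp (by fun_prop)).aestronglyMeasurable) ?_
    exact Filter.Eventually.of_forall fun u => by
      rw [Real.norm_eq_abs, abs_of_nonneg (phi_nonneg _)]; exact phi_le_one _
  have h2 : ∫ u, (Set.Iic γ).indicator (fun _ => stdNormalCDF (a - b*γ)) u ∂P
      ≤ ∫ u, stdNormalCDF (a - b*u) ∂P := by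
    refine integral_mono_of_nonneg
      (.of_forall fun u => Set.indicator_nonneg (fun _ _ => phi_nonneg _) u) hintΦ
      (.of_forall ?_)
    intro u; by_cases h : u ≤ γ
    · simp only [Set.indicator_apply, Set.mem_Iic, if_pos h]
      exact phi_mono (by nlinarith)
    · simp only [Set.indicator_apply, Set.mem_Iic, if_neg h]; exact phi_nonneg _
  rw [integral_indicator_const _ measurableSet_Iic, smul_eq_mul] at h2
  calc (1-δ) * stdNormalCDF (a-b*γ)
      ≤ (P (Set.Iic γ)).toReal * stdNormalCDF (a-b*γ) :=
        mul_le_mul_of_nonneg_right hPIic (phi_nonneg _)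
    _ ≤ _ := h2

lemma integrable_dirac'' (g : ℝ → ℝ) (u : ℝ) : Integrable g (Measure.dirac u) := by
  refine (integrable_const (g u)).congr ?_
  rw [Filter.EventuallyEq, ae_dirac_eq]
  exact Filter.eventually_pure.2 rfl

lemma integral_threePoint {p₁ p₂ p₃ : ℝ} (h₁ : 0 ≤ p₁) (h₂ : 0 ≤ p₂) (h₃ : 0 ≤ p₃)
    (u₁ u₂ u₃ : ℝ) (g : ℝ → ℝ) :
    ∫ x, g x ∂(ENNReal.ofReal p₁ • Measure.dirac u₁ + ENNReal.ofReal p₂ • Measure.dirac u₂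
      + ENNReal.ofReal p₃ • Measure.dirac u₃)
      = p₁ * g u₁ + p₂ * g u₂ + p₃ * g u₃ := by
  have I : ∀ (p : ℝ) (u : ℝ), Integrable g (ENNReal.ofReal p • Measure.dirac u) :=
    fun p u => (integrable_dirac'' g u).smul_measure ENNReal.ofReal_ne_top
  rw [integral_add_measure ((I p₁ u₁).add_measure (I p₂ u₂)) (I p₃ u₃),
    integral_add_measure (I p₁ u₁) (I p₂ u₂),
    integral_smul_measure, integral_smul_measure, integral_smul_measure,
    integral_dirac, integral_dirac, integral_dirac,
    ENNReal.toReal_ofReal h₁, ENNReal.toReal_ofReal h₂, ENNReal.toReal_ofReal h₃]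
  simp [smul_eq_mul]

lemma construction (δ γ a b α : ℝ) (hδ0 : 0 < δ) (hδ1 : δ < 1)
    (hα : 0 < α) (hα2 : α < 1 - δ)
    (f : ℝ → ℝ → ℝ) (hf : ∀ α u, f α u = if u ≤ γ then 0 else 1 + α * (u - γ)) :
    ∃ v : ℝ, (∃ P : Measure ℝ, IsProbabilityMeasure P ∧
      (∃ s : Finset ℝ, s.card ≤ 3 ∧ P (↑s)ᶜ = 0) ∧
      (∫ u, u ∂P) ≤ 0 ∧ (∫ u, f α u ∂P) ≤ δ ∧
      v = ∫ u, stdNormalCDF (a - b * u) ∂P) ∧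
      v ≤ stdNormalCDF (a - b * (γ + (Real.sqrt α)⁻¹)) + (1-δ) * stdNormalCDF (a - b*γ)
        + (α + Real.sqrt α) := by
  set t := Real.sqrt α with ht_def
  have ht : 0 < t := Real.sqrt_pos.2 hα
  have htt : t * t = α := Real.mul_self_sqrt hα.le
  have h1t : 0 < 1 + t := by linarith
  set p₁ := δ / (1 + t) with hp₁_def
  set p₂ := 1 - δ - α with hp₂_def
  set p₃ := 1 - p₁ - p₂ with hp₃_def
  have hp₁ : 0 < p₁ := div_pos hδ0 h1t
  have hp₁' : p₁ ≤ δ := by rw [hp₁_def, div_le_iff₀ h1t]; nlinarith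
  have hp₂ : 0 ≤ p₂ := by rw [hp₂_def]; linarith
  have hp₃e : p₃ = α + δ * t / (1 + t) := by
    rw [hp₃_def, hp₁_def, hp₂_def]; field_simp; ring
  have hp₃ : 0 < p₃ := by rw [hp₃e]; positivity
  have hp₃' : p₃ ≤ α + t := by
    rw [hp₃e]
    have h : δ * t / (1 + t) ≤ t := by rw [div_le_iff₀ h1t]; nlinarith
    linarith
  set u₁ := γ + t⁻¹ with hu₁_def
  set u₂ := γ with hu₂_def
  set u₃ := min γ (-(p₁ * u₁ + p₂ * u₂) / p₃) with hu₃_def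
  set P := ENNReal.ofReal p₁ • Measure.dirac u₁ + ENNReal.ofReal p₂ • Measure.dirac u₂
    + ENNReal.ofReal p₃ • Measure.dirac u₃ with hP_def
  refine ⟨∫ u, stdNormalCDF (a - b * u) ∂P, ⟨P, ?_, ?_, ?_, ?_, rfl⟩, ?_⟩
  · constructor
    have hsum : p₁ + p₂ + p₃ = 1 := by rw [hp₃_def]; ring
    have : P Set.univ = ENNReal.ofReal p₁ + ENNReal.ofReal p₂ + ENNReal.ofReal p₃ := by
      simp [hP_def]
    rw [this, ← ENNReal.ofReal_add hp₁.le hp₂, ← ENNReal.ofReal_add (by linarith) hp₃.le, hsum]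
    norm_num
  · refine ⟨{u₁, u₂, u₃}, ?_, ?_⟩
    · have h1 := Finset.card_insert_le u₁ (insert u₂ ({u₃} : Finset ℝ))
      have h2 := Finset.card_insert_le u₂ ({u₃} : Finset ℝ)
      simp only [Finset.card_singleton] at h1 h2 ⊢
      omega
    · have hd : ∀ u : ℝ, u ∈ (↑({u₁, u₂, u₃} : Finset ℝ) : Set ℝ) →
          Measure.dirac u (↑({u₁, u₂, u₃} : Finset ℝ) : Set ℝ)ᶜ = 0 := by
        intro u hu
        rw [Measure.dirac_apply' _ (Finset.measurableSet _).compl]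
        exact Set.indicator_of_notMem (by simp only [Set.mem_compl_iff]; exact fun h => h hu) _
      have m1 : u₁ ∈ (↑({u₁, u₂, u₃} : Finset ℝ) : Set ℝ) := by simp
      have m2 : u₂ ∈ (↑({u₁, u₂, u₃} : Finset ℝ) : Set ℝ) := by simp
      have m3 : u₃ ∈ (↑({u₁, u₂, u₃} : Finset ℝ) : Set ℝ) := by simp
      simp [hP_def, hd u₁ m1, hd u₂ m2, hd u₃ m3]
  · rw [hP_def, integral_threePoint hp₁.le hp₂ hp₃.le]
    have hu₃le : u₃ ≤ -(p₁ * u₁ + p₂ * u₂) / p₃ := min_le_right _ _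
    have h : p₃ * u₃ ≤ -(p₁ * u₁ + p₂ * u₂) := by
      calc p₃ * u₃ ≤ p₃ * (-(p₁ * u₁ + p₂ * u₂) / p₃) :=
            mul_le_mul_of_nonneg_left hu₃le hp₃.le
        _ = -(p₁ * u₁ + p₂ * u₂) := by field_simp
    linarith
  · rw [hP_def, integral_threePoint hp₁.le hp₂ hp₃.le]
    have hfu₁ : f α u₁ = 1 + t := by
      rw [hf, if_neg (by rw [hu₁_def]; simp [not_le]; positivity)]
      have h1 : u₁ - γ = t⁻¹ := by rw [hu₁_def]; ring
      rw [h1, ← htt]; field_simp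
    have hfu₂ : f α u₂ = 0 := by rw [hf, if_pos (le_refl _)]
    have hfu₃ : f α u₃ = 0 := by rw [hf, if_pos (min_le_left _ _)]
    rw [hfu₁, hfu₂, hfu₃]
    have h : p₁ * (1 + t) = δ := by rw [hp₁_def]; field_simp
    linarith
  · rw [hP_def, integral_threePoint hp₁.le hp₂ hp₃.le]
    have A : p₁ * stdNormalCDF (a - b * u₁) ≤ stdNormalCDF (a - b * u₁) := by
      nlinarith [phi_nonneg (a - b * u₁)]
    have B : p₂ * stdNormalCDF (a - b * u₂) ≤ (1 - δ) * stdNormalCDF (a - b * γ) := by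
      rw [hu₂_def]
      nlinarith [phi_nonneg (a - b * γ)]
    have C : p₃ * stdNormalCDF (a - b * u₃) ≤ α + t := by
      nlinarith [phi_nonneg (a - b * u₃), phi_le_one (a - b * u₃)]
    rw [hu₁_def] at A
    linarith

/-- Fix `δ ∈ (0,1)`, `γ ∈ ℝ`, `a = r/√V`, `b = C'/√V > 0`.
For `α > 0` let `f₁^{(α)}(u) = 0` for `u ≤ γ` and `1 + α(u − γ)` for `u > γ`, and
`G(α) = inf { E[Φ(a − bU)] : U with ≤ 3 support points, E[U] ≤ 0, E[f₁^{(α)}(U)] ≤ δ }`.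
Then `G(α) → (1 − δ)Φ(a − bγ)` as `α → 0⁺`. -/
theorem excess_cost_limit (δ γ a b : ℝ) (hδ0 : 0 < δ) (hδ1 : δ < 1) (hb : 0 < b)
    (f : ℝ → ℝ → ℝ)
    (hf : ∀ α u, f α u = if u ≤ γ then 0 else 1 + α * (u - γ))
    (G : ℝ → ℝ)
    (hG : ∀ α, 0 < α → G α = sInf { v : ℝ | ∃ P : Measure ℝ,
      IsProbabilityMeasure P ∧
      (∃ s : Finset ℝ, s.card ≤ 3 ∧ P (↑s)ᶜ = 0) ∧
      (∫ u, u ∂P) ≤ 0 ∧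
      (∫ u, f α u ∂P) ≤ δ ∧
      v = ∫ u, stdNormalCDF (a - b * u) ∂P }) :
    Tendsto G (𝓝[>] (0 : ℝ)) (𝓝 ((1 - δ) * stdNormalCDF (a - b * γ))) := by
  set L := (1 - δ) * stdNormalCDF (a - b * γ) with hL
  have hBtends : Tendsto
      (fun α : ℝ => stdNormalCDF (a - b * (γ + (Real.sqrt α)⁻¹)) + (α + Real.sqrt α))
      (𝓝[>] (0:ℝ)) (𝓝 0) := by
    have h1 : Tendsto (fun α : ℝ => Real.sqrt α) (𝓝[>] (0:ℝ)) (𝓝[>] (0:ℝ)) := by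
      apply tendsto_nhdsWithin_of_tendsto_nhds_of_eventually_within
      · simpa using (Real.continuous_sqrt.tendsto 0).mono_left nhdsWithin_le_nhds
      · filter_upwards [self_mem_nhdsWithin] with x hx
        exact Real.sqrt_pos.2 hx
    have h2 : Tendsto (fun α : ℝ => (Real.sqrt α)⁻¹) (𝓝[>] (0:ℝ)) atTop :=
      tendsto_inv_nhdsGT_zero.comp h1
    have h3 : Tendsto (fun α : ℝ => a - b * (γ + (Real.sqrt α)⁻¹)) (𝓝[>] (0:ℝ)) atBot := by
      have h4 : Tendsto (fun α : ℝ => b * (Real.sqrt α)⁻¹) (𝓝[>] (0:ℝ)) atTop :=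
        h2.const_mul_atTop hb
      have h5 : Tendsto (fun α : ℝ => -(b * (Real.sqrt α)⁻¹)) (𝓝[>] (0:ℝ)) atBot :=
        tendsto_neg_atBot_iff.2 h4
      have h6 := tendsto_atBot_add_const_left (𝓝[>] (0:ℝ)) (a - b * γ) h5
      exact h6.congr (fun x => by ring)
    have h7 : Tendsto (fun α : ℝ => stdNormalCDF (a - b * (γ + (Real.sqrt α)⁻¹)))
        (𝓝[>] (0:ℝ)) (𝓝 0) := phi_tendsto_atBot.comp h3
    have h8 : Tendsto (fun α : ℝ => α + Real.sqrt α) (𝓝[>] (0:ℝ)) (𝓝 0) := by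
      have hc : Continuous fun α : ℝ => α + Real.sqrt α := continuous_id.add Real.continuous_sqrt
      simpa using (hc.tendsto 0).mono_left nhdsWithin_le_nhds
    simpa using h7.add h8
  have key : ∀ α ∈ Set.Ioo (0:ℝ) (1 - δ), L ≤ G α ∧
      G α ≤ L + (stdNormalCDF (a - b * (γ + (Real.sqrt α)⁻¹)) + (α + Real.sqrt α)) := by
    intro α hα
    obtain ⟨v, hv, hvle⟩ := construction δ γ a b α hδ0 hδ1 hα.1 hα.2 f hf
    rw [hG α hα.1]
    have hbdd : BddBelow { v : ℝ | ∃ P : Measure ℝ,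
        IsProbabilityMeasure P ∧
        (∃ s : Finset ℝ, s.card ≤ 3 ∧ P (↑s)ᶜ = 0) ∧
        (∫ u, u ∂P) ≤ 0 ∧
        (∫ u, f α u ∂P) ≤ δ ∧
        v = ∫ u, stdNormalCDF (a - b * u) ∂P } := by
      refine ⟨0, fun x hx => ?_⟩
      obtain ⟨P, hP, _, _, _, rfl⟩ := hx
      exact integral_nonneg fun u => phi_nonneg _
    constructor
    · refine le_csInf ⟨v, hv⟩ ?_
      rintro x ⟨P, hP, ⟨s, _, hs⟩, _, hfP, rfl⟩
      exact lower_bound δ γ a b α hb hα.1 f hf P hP s hs hfP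
    · exact (csInf_le hbdd hv).trans (by rw [hL]; linarith)
  have hmem : Set.Ioo (0:ℝ) (1 - δ) ∈ 𝓝[>] (0:ℝ) :=
    Ioo_mem_nhdsGT_of_mem ⟨le_refl 0, by linarith⟩
  refine tendsto_of_tendsto_of_tendsto_of_le_of_le'
    (h := fun α : ℝ => L + (stdNormalCDF (a - b * (γ + (Real.sqrt α)⁻¹)) + (α + Real.sqrt α)))
    (tendsto_const_nhds (x := L)) ?_ ?_ ?_
  · simpa using (tendsto_const_nhds (x := L) (f := 𝓝[>] (0:ℝ))).add hBtends
  · filter_upwards [hmem] with α hα; exact (key α hα).1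
  · filter_upwards [hmem] with α hα; exact (key α hα).2
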